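/- Let κ ≥ 3 be a cardinal and let α ≥ 1 be a countable ordinal. Let G^α_{L_0} denote the setwise stabiliser of L_0 in the isometry group of T_κ^{[α]}. Then the homomorphism G^α_{L_0} → Isom(L_0) induced by restriction is surjective; in particular, for every r > 0 there is an isometry of T_κ^{[α]} preserving L_0 and acting on L_0 ≅ ℝ as the translation by r, and there is an isometry of T_κ^{[α]} preserving L_0 and acting on L_0 as a reflection. -/

import Mathlib

open Set Filter

noncomputable section

/-- `C` is a valid label set for the valence cardinal `κ`:
`|C| = κ` if `κ` is infinite and `|C| + 1 = κ` (i.e. `|C| = κ - 1`) if `κ` is finite. -/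
def IsLabelSet (κ : Cardinal) (C : Type) : Prop :=
  (Cardinal.aleph0 ≤ κ → Cardinal.mk C = κ) ∧ (κ < Cardinal.aleph0 → Cardinal.mk C + 1 = κ)

/-- An ordinal is countable. -/
def IsCountableOrdinal (o : Ordinal) : Prop := o.card ≤ Cardinal.aleph0

/-- One-step Cantor–Bendixson derivative of a set: its non-isolated points. -/
def cbStep {X : Type*} [TopologicalSpace X] (A : Set X) : Set X :=
  {x | x ∈ A ∧ AccPt x (Filter.principal A)}

/-- The iterated Cantor–Bendixson derivative of a set. -/
def cbDeriv {X : Type*} [TopologicalSpace X] (A : Set X) (o : Ordinal) : Set X :=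
  Ordinal.limitRecOn o A (fun _ ih => cbStep ih)
    (fun o _ ih => ⋂ (o' : Ordinal) (h : o' < o), ih o' h)

/-- The Cantor–Bendixson rank of a set: the least ordinal `γ` such that the `(γ+1)`-st
Cantor–Bendixson derivative equals the `γ`-th one. -/
def cbRank {X : Type*} [TopologicalSpace X] (A : Set X) : Ordinal :=
  sInf {γ | cbDeriv A (γ + 1) = cbDeriv A γ}

theorem cbDeriv_zero {X : Type*} [TopologicalSpace X] (A : Set X) : cbDeriv A 0 = A :=
  Ordinal.limitRecOn_zero ..

theorem cbDeriv_one {X : Type*} [TopologicalSpace X] (A : Set X) :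
    cbDeriv A 1 = cbStep A := by
  have : (1 : Ordinal) = Order.succ 0 := by
    rw [← Ordinal.add_one_eq_succ, zero_add]
  rw [cbDeriv, this, Ordinal.limitRecOn_succ]
  rw [← cbDeriv, cbDeriv_zero]

theorem cbStep_empty {X : Type*} [TopologicalSpace X] : cbStep (∅ : Set X) = ∅ := by
  ext x; simp [cbStep]

theorem cbRank_empty {X : Type*} [TopologicalSpace X] : cbRank (∅ : Set X) = 0 := by
  refine le_antisymm ?_ zero_le
  refine csInf_le' ?_
  show cbDeriv (∅ : Set X) (0 + 1) = cbDeriv (∅ : Set X) 0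
  rw [zero_add, cbDeriv_one, cbDeriv_zero, cbStep_empty]

/-- A point of Dyubina's universal real tree over the label set `C` (with distinguished label
`z`): a function `(-∞, ρ) → C`, encoded as a total function on `ℝ` which takes the value `z`
on `[ρ, ∞)`, which is eventually `z` near `-∞` and piecewise constant from the right. -/
structure UTree (C : Type) (z : C) where
  ρ : ℝ
  f : ℝ → C
  apply_eq_of_ge : ∀ t, ρ ≤ t → f t = z
  eventually_zero : ∃ s, s ≤ ρ ∧ ∀ t, t < s → f t = z
  piecewise_const : ∀ t, t < ρ → ∃ ε > 0, ∀ u, t ≤ u → u ≤ t + ε → u < ρ → f u = f t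

namespace UTree

variable {C : Type} {z : C}

theorem ext' {a b : UTree C z} (h1 : a.ρ = b.ρ) (h2 : a.f = b.f) : a = b := by
  cases a; cases b; cases h1; cases h2; rfl

/-- The partial order `⪯` : `a ⪯ b` iff `a` is the restriction of `b` to `(-∞, ρ_a)`. -/
protected def le (a b : UTree C z) : Prop :=
  a.ρ ≤ b.ρ ∧ ∀ t, t < a.ρ → a.f t = b.f t

/-- The strict order `≺`. -/
protected def lt (a b : UTree C z) : Prop := a.le b ∧ a ≠ b

/-- The set of times up to which `a` and `b` agree. -/
def agreeSet (a b : UTree C z) : Set ℝ :=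
  {t | t ≤ min a.ρ b.ρ ∧ ∀ u, u < t → a.f u = b.f u}

theorem agreeSet_nonempty (a b : UTree C z) : (agreeSet a b).Nonempty := by
  obtain ⟨s₁, hs₁, h₁⟩ := a.eventually_zero
  obtain ⟨s₂, hs₂, h₂⟩ := b.eventually_zero
  refine ⟨min s₁ s₂, le_min ((min_le_left _ _).trans hs₁) ((min_le_right _ _).trans hs₂), ?_⟩
  intro u hu
  rw [h₁ u (lt_of_lt_of_le hu (min_le_left _ _)), h₂ u (lt_of_lt_of_le hu (min_le_right _ _))]

theorem agreeSet_bddAbove (a b : UTree C z) : BddAbove (agreeSet a b) :=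
  ⟨min a.ρ b.ρ, fun _ ht => ht.1⟩

/-- `ρ_{a ∧ b}`, the height of the wedge of `a` and `b`. -/
def wedgeρ (a b : UTree C z) : ℝ := sSup (agreeSet a b)

theorem wedgeρ_le_min (a b : UTree C z) : wedgeρ a b ≤ min a.ρ b.ρ :=
  csSup_le (agreeSet_nonempty a b) fun _ ht => ht.1

theorem agree_of_lt_wedgeρ (a b : UTree C z) {u : ℝ} (hu : u < wedgeρ a b) :
    a.f u = b.f u := by
  obtain ⟨t, ht, hut⟩ := exists_lt_of_lt_csSup (agreeSet_nonempty a b) hu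
  exact ht.2 u hut

theorem le_wedgeρ {a b : UTree C z} {t : ℝ} (ht : t ∈ agreeSet a b) : t ≤ wedgeρ a b :=
  le_csSup (agreeSet_bddAbove a b) ht

theorem wedgeρ_comm (a b : UTree C z) : wedgeρ a b = wedgeρ b a := by
  unfold wedgeρ agreeSet
  congr 1
  ext t
  constructor <;> rintro ⟨h1, h2⟩ <;>
    exact ⟨by rwa [min_comm], fun u hu => (h2 u hu).symm⟩

theorem wedgeρ_self (a : UTree C z) : wedgeρ a a = a.ρ := by
  refine le_antisymm ((wedgeρ_le_min a a).trans (by simp)) ?_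
  exact le_wedgeρ ⟨by simp, fun _ _ => rfl⟩

/-- Restriction of `a` to `(-∞, s)` for `s ≤ ρ_a`. -/
def restrict (a : UTree C z) (s : ℝ) (hs : s ≤ a.ρ) : UTree C z where
  ρ := s
  f := fun t => if t < s then a.f t else z
  apply_eq_of_ge := fun t ht => by
    show (if t < s then a.f t else z) = z
    rw [if_neg (not_lt.mpr ht)]
  eventually_zero := by
    obtain ⟨s', hs', h'⟩ := a.eventually_zero
    refine ⟨min s' s, min_le_right _ _, fun t ht => ?_⟩
    show (if t < s then a.f t else z) = z
    by_cases h : t < s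
    · rw [if_pos h]; exact h' t (lt_of_lt_of_le ht (min_le_left _ _))
    · rw [if_neg h]
  piecewise_const := fun t ht => by
    obtain ⟨ε, hε, h⟩ := a.piecewise_const t (lt_of_lt_of_le ht hs)
    refine ⟨ε, hε, fun u hu1 hu2 hu3 => ?_⟩
    show (if u < s then a.f u else z) = (if t < s then a.f t else z)
    rw [if_pos hu3, if_pos ht]
    exact h u hu1 hu2 (lt_of_lt_of_le hu3 hs)

/-- The wedge `a ∧ b`: the restriction of `a` to `(-∞, ρ_{a ∧ b})`. -/
def wedge (a b : UTree C z) : UTree C z :=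
  a.restrict (wedgeρ a b) ((wedgeρ_le_min a b).trans (min_le_left _ _))

theorem min_wedgeρ_le (a b c : UTree C z) :
    min (wedgeρ a b) (wedgeρ b c) ≤ wedgeρ a c := by
  refine le_wedgeρ ⟨le_min ?_ ?_, fun u hu => ?_⟩
  · exact (min_le_left _ _).trans ((wedgeρ_le_min a b).trans (min_le_left _ _))
  · exact (min_le_right _ _).trans ((wedgeρ_le_min b c).trans (min_le_right _ _))
  · have h1 : a.f u = b.f u :=
      agree_of_lt_wedgeρ a b (lt_of_lt_of_le hu (min_le_left _ _))
    have h2 : b.f u = c.f u :=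
      agree_of_lt_wedgeρ b c (lt_of_lt_of_le hu (min_le_right _ _))
    exact h1.trans h2

/-- The metric `d(a,b) = ρ_a + ρ_b - 2 ρ_{a ∧ b}` on the universal real tree. -/
instance : MetricSpace (UTree C z) where
  dist a b := a.ρ + b.ρ - 2 * wedgeρ a b
  dist_self a := by simp [wedgeρ_self]; ring
  dist_comm a b := by simp only [wedgeρ_comm a b]; ring
  dist_triangle a b c := by
    have hmin := min_wedgeρ_le a b c
    have h1 : wedgeρ a b ≤ b.ρ := (wedgeρ_le_min a b).trans (min_le_right _ _)
    have h2 : wedgeρ b c ≤ b.ρ := (wedgeρ_le_min b c).trans (min_le_left _ _)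
    rcases min_cases (wedgeρ a b) (wedgeρ b c) with ⟨heq, hle⟩ | ⟨heq, hle⟩ <;>
      (rw [heq] at hmin;
        show a.ρ + c.ρ - 2 * wedgeρ a c ≤ (a.ρ + b.ρ - 2 * wedgeρ a b) + (b.ρ + c.ρ - 2 * wedgeρ b c);
        linarith)
  eq_of_dist_eq_zero := by
    intro a b h
    have h1 : wedgeρ a b ≤ a.ρ := (wedgeρ_le_min a b).trans (min_le_left _ _)
    have h2 : wedgeρ a b ≤ b.ρ := (wedgeρ_le_min a b).trans (min_le_right _ _)
    have hd : a.ρ + b.ρ - 2 * wedgeρ a b = 0 := h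
    have ha : a.ρ = wedgeρ a b := by linarith
    have hb : b.ρ = wedgeρ a b := by linarith
    refine ext' (ha.trans hb.symm) (funext fun t => ?_)
    by_cases ht : t < wedgeρ a b
    · exact agree_of_lt_wedgeρ a b ht
    · rw [a.apply_eq_of_ge t (ha.le.trans (not_lt.mp ht)),
        b.apply_eq_of_ge t (hb.le.trans (not_lt.mp ht))]

theorem dist_def (a b : UTree C z) : dist a b = a.ρ + b.ρ - 2 * wedgeρ a b := rfl

/-- The point `c_ℓ`: the constant function `(-∞, ℓ) → C` with value `z`. -/
def cconst (ℓ : ℝ) : UTree C z where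
  ρ := ℓ
  f := fun _ => z
  apply_eq_of_ge := fun _ _ => rfl
  eventually_zero := ⟨ℓ, le_refl ℓ, fun _ _ => rfl⟩
  piecewise_const := fun _ _ => ⟨1, one_pos, fun _ _ _ _ => rfl⟩

/-- The set of points at which `a` is locally non-constant from the left, whose closure is the
set `P_a`. -/
def badSet (a : UTree C z) : Set ℝ :=
  {t | t < a.ρ ∧ ∀ ε > 0, ∃ u ∈ Icc (t - ε) t, ∃ v ∈ Icc (t - ε) t, a.f u ≠ a.f v}

/-- The set `P_a`. -/
def Pset (a : UTree C z) : Set ℝ := closure (badSet a)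

/-- The complexity of `a`: the Cantor–Bendixson rank of `P_a`. -/
def comp (a : UTree C z) : Ordinal := cbRank (Pset a)

/-- The complexity of a pair `a ≺ b`: the Cantor–Bendixson rank of `P_b ∩ [ρ_a, ρ_b]`. -/
def pairComp (a b : UTree C z) : Ordinal := cbRank (Pset b ∩ Icc a.ρ b.ρ)

/-- `τ_a`: the maximum of all `s ≤ ρ_a` such that `a` is `z` below `s`. -/
def tau (a : UTree C z) : ℝ := sSup {s | s ≤ a.ρ ∧ ∀ t, t < s → a.f t = z}

/-- The tree `T_κ^{[α]}` of points of complexity at most `α`. -/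
def level (z : C) (α : Ordinal) : Set (UTree C z) := {a | comp a ≤ α}

theorem Pset_cconst (ℓ : ℝ) : Pset (cconst ℓ : UTree C z) = ∅ := by
  have : badSet (cconst ℓ : UTree C z) = ∅ := by
    ext t
    simp only [badSet, mem_setOf_eq, mem_empty_iff_false, iff_false, not_and]
    intro _
    push_neg
    exact ⟨1, one_pos, fun u _ v _ => rfl⟩
  rw [Pset, this, closure_empty]

theorem comp_cconst (ℓ : ℝ) : comp (cconst ℓ : UTree C z) = 0 := by
  rw [comp, Pset_cconst, cbRank_empty]

theorem cconst_mem_level {ℓ : ℝ} (α : Ordinal) : (cconst ℓ : UTree C z) ∈ level z α := by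
  show comp _ ≤ α
  rw [comp_cconst]
  exact zero_le

/-- The canonical line `L_0 = {c_ℓ : ℓ ∈ ℝ}`. -/
def L0 (z : C) : Set (UTree C z) := Set.range fun ℓ => (cconst ℓ : UTree C z)

/-- The extension of `a` by the label `c` on `[ρ_a, ρ_a + 1)`. -/
def extend (a : UTree C z) (c : C) : UTree C z where
  ρ := a.ρ + 1
  f := fun t => if t < a.ρ then a.f t else if t < a.ρ + 1 then c else z
  apply_eq_of_ge := fun t ht => by
    show (if t < a.ρ then a.f t else if t < a.ρ + 1 then c else z) = z
    rw [if_neg (not_lt.mpr (by linarith)), if_neg (not_lt.mpr ht)]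
  eventually_zero := by
    obtain ⟨s, hs, h⟩ := a.eventually_zero
    refine ⟨min s a.ρ, by have := min_le_right s a.ρ; linarith, fun t ht => ?_⟩
    show (if t < a.ρ then a.f t else if t < a.ρ + 1 then c else z) = z
    rw [if_pos (lt_of_lt_of_le ht (min_le_right _ _))]
    exact h t (lt_of_lt_of_le ht (min_le_left _ _))
  piecewise_const := by
    intro t ht
    by_cases htρ : t < a.ρ
    · obtain ⟨ε, hε, h⟩ := a.piecewise_const t htρ
      refine ⟨min ε ((a.ρ - t) / 2), lt_min hε (by linarith), fun u hu1 hu2 _ => ?_⟩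
      have hu3 : u < a.ρ := by
        have := hu2.trans (add_le_add (le_refl t) (min_le_right _ _))
        linarith
      show (if u < a.ρ then a.f u else if u < a.ρ + 1 then c else z) =
        (if t < a.ρ then a.f t else if t < a.ρ + 1 then c else z)
      rw [if_pos hu3, if_pos htρ]
      exact h u hu1 (hu2.trans (add_le_add (le_refl t) (min_le_left _ _))) hu3
    · refine ⟨(a.ρ + 1 - t) / 2, by linarith, fun u hu1 hu2 _ => ?_⟩
      have h1 : ¬u < a.ρ := by push_neg at htρ ⊢; linarith
      have h2 : u < a.ρ + 1 := by linarith
      show (if u < a.ρ then a.f u else if u < a.ρ + 1 then c else z) =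
        (if t < a.ρ then a.f t else if t < a.ρ + 1 then c else z)
      rw [if_neg h1, if_pos h2, if_neg htρ, if_pos ht]

end UTree

/-- A subset of a metric space is (geodesically) convex if it contains every point
metrically between two of its points. -/
def MetricConvex {X : Type*} [MetricSpace X] (S : Set X) : Prop :=
  ∀ x ∈ S, ∀ y ∈ S, ∀ w, dist x w + dist w y = dist x y → w ∈ S

/-- `D` is a direction at `x`: a connected component of the complement of `{x}`. -/
def IsDirectionAt {X : Type*} [TopologicalSpace X] (x : X) (D : Set X) : Prop :=
  ∃ y, y ≠ x ∧ D = connectedComponentIn {w | w ≠ x} y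

/-- The valence of a space at a point: the number of connected components of the
complement of that point. -/
def valenceAt {X : Type*} [TopologicalSpace X] (x : X) : Cardinal :=
  Cardinal.mk {D : Set X // IsDirectionAt x D}

/-- A real tree: a geodesic metric space in which any two points are joined by a unique arc. -/
def IsRealTree (X : Type*) [MetricSpace X] : Prop :=
  (∀ x y : X, ∃ γ : ℝ → X, γ 0 = x ∧ γ (dist x y) = y ∧
      ∀ s ∈ Icc (0 : ℝ) (dist x y), ∀ t ∈ Icc (0 : ℝ) (dist x y),
        dist (γ s) (γ t) = |s - t|) ∧
  (∀ (x y : X) (γ₁ γ₂ : Path x y), Function.Injective γ₁ → Function.Injective γ₂ →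
      Set.range γ₁ = Set.range γ₂)

/-! ### Auxiliary lemmas -/

theorem cbDeriv_succ' {X : Type*} [TopologicalSpace X] (A : Set X) (o : Ordinal) :
    cbDeriv A (Order.succ o) = cbStep (cbDeriv A o) := by
  rw [cbDeriv, Ordinal.limitRecOn_succ]
  rfl

theorem cbDeriv_limit' {X : Type*} [TopologicalSpace X] (A : Set X) {o : Ordinal}
    (ho : Order.IsSuccLimit o) :
    cbDeriv A o = ⋂ (o' : Ordinal) (_ : o' < o), cbDeriv A o' := by
  rw [cbDeriv, Ordinal.limitRecOn_limit _ _ _ _ ho]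
  rfl

theorem accPt_image_iff {X Y : Type*} [TopologicalSpace X] [TopologicalSpace Y] (e : X ≃ₜ Y)
    (A : Set X) (x : X) : AccPt (e x) (Filter.principal (e '' A)) ↔ AccPt x (Filter.principal A) := by
  constructor
  · intro h
    have h2 := h.map e.symm.continuous.continuousAt e.symm.injective
    rw [Filter.map_principal] at h2
    simpa [Homeomorph.symm_apply_apply, Set.image_image] using h2
  · intro h
    have h2 := h.map e.continuous.continuousAt e.injective
    rwa [Filter.map_principal] at h2

theorem cbStep_image' {X Y : Type*} [TopologicalSpace X] [TopologicalSpace Y] (e : X ≃ₜ Y)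
    (A : Set X) : cbStep (e '' A) = e '' cbStep A := by
  ext y
  constructor
  · rintro ⟨⟨x, hx, rfl⟩, hacc⟩
    exact ⟨x, ⟨hx, (accPt_image_iff e A x).mp hacc⟩, rfl⟩
  · rintro ⟨x, ⟨hx, hacc⟩, rfl⟩
    exact ⟨⟨x, hx, rfl⟩, (accPt_image_iff e A x).mpr hacc⟩

theorem cbDeriv_image' {X Y : Type*} [TopologicalSpace X] [TopologicalSpace Y] (e : X ≃ₜ Y)
    (A : Set X) (o : Ordinal) : cbDeriv (e '' A) o = e '' cbDeriv A o := by
  induction o using Ordinal.limitRecOn with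
  | zero => rw [cbDeriv_zero, cbDeriv_zero]
  | add_one o ih => rw [Ordinal.add_one_eq_succ, cbDeriv_succ', cbDeriv_succ', ih, cbStep_image']
  | limit o ho ih =>
      rw [cbDeriv_limit' _ ho, cbDeriv_limit' _ ho, Set.image_iInter₂ e.bijective]
      exact Set.iInter₂_congr ih

theorem cbRank_image' {X Y : Type*} [TopologicalSpace X] [TopologicalSpace Y] (e : X ≃ₜ Y)
    (A : Set X) : cbRank (e '' A) = cbRank A := by
  unfold cbRank
  congr 1
  ext γ
  simp only [mem_setOf_eq, cbDeriv_image']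
  exact Function.Injective.eq_iff (Set.image_injective.mpr e.injective)

theorem sSup_image_add_const (S : Set ℝ) (δ : ℝ) (hS : S.Nonempty) (hSb : BddAbove S) :
    sSup ((fun x => x + δ) '' S) = sSup S + δ := by
  apply IsLUB.csSup_eq _ (hS.image _)
  constructor
  · rintro x ⟨y, hy, rfl⟩
    exact add_le_add_left (le_csSup hSb hy) δ
  · intro b hb
    have h1 : sSup S ≤ b - δ := csSup_le hS fun y hy => by
      have h2 : y + δ ≤ b := hb ⟨y, hy, rfl⟩
      linarith
    linarith

namespace UTree

variable {C : Type} {z : C}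

theorem tauSet_nonempty (a : UTree C z) : {s | s ≤ a.ρ ∧ ∀ t, t < s → a.f t = z}.Nonempty := by
  obtain ⟨s, hs, h⟩ := a.eventually_zero
  exact ⟨s, hs, h⟩

theorem tauSet_bddAbove (a : UTree C z) : BddAbove {s | s ≤ a.ρ ∧ ∀ t, t < s → a.f t = z} :=
  ⟨a.ρ, fun _ h => h.1⟩

theorem tau_le_ρ (a : UTree C z) : tau a ≤ a.ρ :=
  csSup_le (tauSet_nonempty a) fun _ h => h.1

theorem apply_eq_of_lt_tau (a : UTree C z) {t : ℝ} (ht : t < tau a) : a.f t = z := by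
  obtain ⟨s, hs, h⟩ := exists_lt_of_lt_csSup (tauSet_nonempty a) ht
  exact hs.2 t h

theorem le_tau' {a : UTree C z} {s : ℝ} (h : s ≤ a.ρ) (h2 : ∀ t, t < s → a.f t = z) :
    s ≤ tau a :=
  le_csSup (tauSet_bddAbove a) ⟨h, h2⟩

theorem apply_tau_ne (a : UTree C z) (h : tau a < a.ρ) : a.f (tau a) ≠ z := by
  intro hz
  obtain ⟨ε, hε, hc⟩ := a.piecewise_const (tau a) h
  have hle : min (tau a + ε) a.ρ ≤ tau a := by
    apply le_tau' (min_le_right _ _)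
    intro t ht
    rcases lt_or_ge t (tau a) with h' | h'
    · exact apply_eq_of_lt_tau a h'
    · have ht1 : t ≤ tau a + ε := le_of_lt (lt_of_lt_of_le ht (min_le_left _ _))
      have ht2 : t < a.ρ := lt_of_lt_of_le ht (min_le_right _ _)
      rw [hc t h' ht1 ht2, hz]
  have : tau a < min (tau a + ε) a.ρ := lt_min (by linarith) h
  linarith

theorem min_tau_le_wedgeρ (a b : UTree C z) : min (tau a) (tau b) ≤ wedgeρ a b :=
  le_wedgeρ ⟨le_min ((min_le_left _ _).trans (tau_le_ρ a))
      ((min_le_right _ _).trans (tau_le_ρ b)),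
    fun u hu => by
      rw [apply_eq_of_lt_tau a (hu.trans_le (min_le_left _ _)),
        apply_eq_of_lt_tau b (hu.trans_le (min_le_right _ _))]⟩

theorem wedgeρ_eq_of_tau_lt {a b : UTree C z} (h : tau a < tau b) : wedgeρ a b = tau a := by
  refine le_antisymm ?_ ?_
  · rcases eq_or_lt_of_le (tau_le_ρ a) with hρ | hρ
    · exact ((wedgeρ_le_min a b).trans (min_le_left _ _)).trans_eq hρ.symm
    · by_contra hc
      push_neg at hc
      have h1 : a.f (tau a) = b.f (tau a) := agree_of_lt_wedgeρ a b hc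
      exact apply_tau_ne a hρ (h1.trans (apply_eq_of_lt_tau b h))
  · have := min_tau_le_wedgeρ a b
    rwa [min_eq_left h.le] at this

/-- Translate a point of the tree in time by `δ`. -/
def shift (a : UTree C z) (δ : ℝ) : UTree C z where
  ρ := a.ρ + δ
  f := fun t => a.f (t - δ)
  apply_eq_of_ge := fun t ht => a.apply_eq_of_ge _ (by linarith)
  eventually_zero := by
    obtain ⟨s, hs, h⟩ := a.eventually_zero
    exact ⟨s + δ, by linarith, fun t ht => h _ (by linarith)⟩
  piecewise_const := fun t ht => by
    obtain ⟨ε, hε, h⟩ := a.piecewise_const (t - δ) (by linarith)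
    exact ⟨ε, hε, fun u h1 h2 h3 => h (u - δ) (by linarith) (by linarith) (by linarith)⟩

theorem shift_shift (a : UTree C z) (δ₁ δ₂ : ℝ) :
    shift (shift a δ₁) δ₂ = shift a (δ₁ + δ₂) := by
  refine ext' (by show a.ρ + δ₁ + δ₂ = a.ρ + (δ₁ + δ₂); ring) (funext fun t => ?_)
  show a.f (t - δ₂ - δ₁) = a.f (t - (δ₁ + δ₂))
  congr 1
  ring

theorem shift_zero (a : UTree C z) : shift a 0 = a :=
  ext' (add_zero _) (funext fun t => by show a.f (t - 0) = a.f t; rw [sub_zero])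

theorem tau_shift (a : UTree C z) (δ : ℝ) : tau (shift a δ) = tau a + δ := by
  have hset : {s | s ≤ (shift a δ).ρ ∧ ∀ t, t < s → (shift a δ).f t = z}
      = (fun x => x + δ) '' {s | s ≤ a.ρ ∧ ∀ t, t < s → a.f t = z} := by
    ext x
    simp only [mem_setOf_eq, mem_image]
    constructor
    · rintro ⟨h1, h2⟩
      refine ⟨x - δ, ⟨?_, fun t ht => ?_⟩, by ring⟩
      · have : x ≤ a.ρ + δ := h1
        linarith
      · have h3 := h2 (t + δ) (by linarith)
        have he : t + δ - δ = t := by ring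
        show a.f t = z
        rw [← he]
        exact h3
    · rintro ⟨y, ⟨h1, h2⟩, rfl⟩
      refine ⟨?_, fun t ht => ?_⟩
      · show y + δ ≤ a.ρ + δ
        linarith
      · show a.f (t - δ) = z
        exact h2 _ (by linarith)
  rw [tau, hset, sSup_image_add_const _ δ (tauSet_nonempty a) (tauSet_bddAbove a)]
  rfl

theorem agreeSet_shift (a b : UTree C z) (δ : ℝ) :
    agreeSet (shift a δ) (shift b δ) = (fun x => x + δ) '' agreeSet a b := by
  ext t
  simp only [agreeSet, mem_setOf_eq, mem_image, le_min_iff]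
  constructor
  · rintro ⟨⟨h1, h2⟩, h3⟩
    refine ⟨t - δ, ⟨⟨?_, ?_⟩, fun u hu => ?_⟩, by ring⟩
    · have : t ≤ a.ρ + δ := h1
      linarith
    · have : t ≤ b.ρ + δ := h2
      linarith
    · have h4 := h3 (u + δ) (by linarith)
      have he : u + δ - δ = u := by ring
      show a.f u = b.f u
      rw [← he]
      exact h4
  · rintro ⟨y, ⟨⟨h1, h2⟩, h3⟩, rfl⟩
    refine ⟨⟨?_, ?_⟩, fun u hu => ?_⟩
    · show y + δ ≤ a.ρ + δ
      linarith
    · show y + δ ≤ b.ρ + δ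
      linarith
    · show a.f (u - δ) = b.f (u - δ)
      exact h3 _ (by linarith)

theorem wedgeρ_shift (a b : UTree C z) (δ : ℝ) :
    wedgeρ (shift a δ) (shift b δ) = wedgeρ a b + δ := by
  rw [wedgeρ, agreeSet_shift,
    sSup_image_add_const _ δ (agreeSet_nonempty a b) (agreeSet_bddAbove a b)]
  rfl

theorem dist_shift (a b : UTree C z) (δ : ℝ) :
    dist (shift a δ) (shift b δ) = dist a b := by
  rw [dist_def, dist_def, wedgeρ_shift]
  show a.ρ + δ + (b.ρ + δ) - 2 * (wedgeρ a b + δ) = a.ρ + b.ρ - 2 * wedgeρ a b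
  ring

theorem badSet_shift (a : UTree C z) (δ : ℝ) :
    badSet (shift a δ) = (fun x => x + δ) '' badSet a := by
  ext t
  simp only [badSet, mem_setOf_eq, mem_image, Set.mem_Icc]
  constructor
  · rintro ⟨h1, h2⟩
    refine ⟨t - δ, ⟨?_, fun ε hε => ?_⟩, by ring⟩
    · have : t < a.ρ + δ := h1
      linarith
    · obtain ⟨u, hu, v, hv, huv⟩ := h2 ε hε
      refine ⟨u - δ, ⟨by linarith [hu.1], by linarith [hu.2]⟩,
        v - δ, ⟨by linarith [hv.1], by linarith [hv.2]⟩, ?_⟩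
      exact huv
  · rintro ⟨y, ⟨h1, h2⟩, rfl⟩
    refine ⟨?_, fun ε hε => ?_⟩
    · show y + δ < a.ρ + δ
      linarith
    · obtain ⟨u, hu, v, hv, huv⟩ := h2 ε hε
      refine ⟨u + δ, ⟨by linarith [hu.1], by linarith [hu.2]⟩,
        v + δ, ⟨by linarith [hv.1], by linarith [hv.2]⟩, ?_⟩
      show a.f (u + δ - δ) ≠ a.f (v + δ - δ)
      have heu : u + δ - δ = u := by ring
      have hev : v + δ - δ = v := by ring
      rw [heu, hev]
      exact huv

theorem Pset_shift (a : UTree C z) (δ : ℝ) :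
    Pset (shift a δ) = (fun x => x + δ) '' Pset a := by
  rw [Pset, Pset, badSet_shift]
  exact ((Homeomorph.addRight δ).image_closure (badSet a)).symm

theorem comp_shift (a : UTree C z) (δ : ℝ) : comp (shift a δ) = comp a := by
  rw [comp, comp, Pset_shift]
  exact cbRank_image' (Homeomorph.addRight δ) (Pset a)

/-- The "reflection" map with parameter `c`: shift each point by `c - 2 τ_a`.
On the canonical line it acts as `s ↦ c - s`. -/
def reflShift (c : ℝ) (a : UTree C z) : UTree C z := shift a (c - 2 * tau a)

theorem tau_reflShift (c : ℝ) (a : UTree C z) : tau (reflShift c a) = c - tau a := by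
  rw [reflShift, tau_shift]
  ring

theorem reflShift_reflShift (c : ℝ) (a : UTree C z) : reflShift c (reflShift c a) = a := by
  show shift (shift a (c - 2 * tau a)) (c - 2 * tau (shift a (c - 2 * tau a))) = a
  rw [tau_shift, shift_shift,
    show c - 2 * tau a + (c - 2 * (tau a + (c - 2 * tau a))) = 0 by ring, shift_zero]

theorem dist_reflShift (c : ℝ) (a b : UTree C z) :
    dist (reflShift c a) (reflShift c b) = dist a b := by
  rcases lt_trichotomy (tau a) (tau b) with h | h | h
  · have hw : wedgeρ a b = tau a := wedgeρ_eq_of_tau_lt h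
    have hw' : wedgeρ (reflShift c b) (reflShift c a) = tau (reflShift c b) :=
      wedgeρ_eq_of_tau_lt (by rw [tau_reflShift, tau_reflShift]; linarith)
    rw [dist_def, dist_def, wedgeρ_comm (reflShift c a), hw', tau_reflShift, hw]
    show a.ρ + (c - 2 * tau a) + (b.ρ + (c - 2 * tau b)) - 2 * (c - tau b)
        = a.ρ + b.ρ - 2 * tau a
    ring
  · show dist (shift a (c - 2 * tau a)) (shift b (c - 2 * tau b)) = dist a b
    rw [h, dist_shift]
  · have hw : wedgeρ b a = tau b := wedgeρ_eq_of_tau_lt h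
    have hw' : wedgeρ (reflShift c a) (reflShift c b) = tau (reflShift c a) :=
      wedgeρ_eq_of_tau_lt (by rw [tau_reflShift, tau_reflShift]; linarith)
    rw [dist_def, dist_def, hw', tau_reflShift, wedgeρ_comm a b, hw]
    show a.ρ + (c - 2 * tau a) + (b.ρ + (c - 2 * tau b)) - 2 * (c - tau a)
        = a.ρ + b.ρ - 2 * tau b
    ring

theorem comp_reflShift (c : ℝ) (a : UTree C z) : comp (reflShift c a) = comp a :=
  comp_shift a _

theorem tau_cconst (ℓ : ℝ) : tau (cconst ℓ : UTree C z) = ℓ := by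
  have hset : {s | s ≤ (cconst ℓ : UTree C z).ρ ∧ ∀ t, t < s → (cconst ℓ : UTree C z).f t = z}
      = Iic ℓ := by
    ext s
    simp only [mem_setOf_eq, mem_Iic]
    exact ⟨fun h => h.1, fun h => ⟨h, fun _ _ => rfl⟩⟩
  rw [tau, hset, csSup_Iic]

theorem shift_cconst (ℓ δ : ℝ) : shift (cconst ℓ : UTree C z) δ = cconst (ℓ + δ) :=
  ext' rfl rfl

theorem reflShift_cconst (c ℓ : ℝ) : reflShift c (cconst ℓ : UTree C z) = cconst (c - ℓ) := by
  rw [reflShift, tau_cconst, shift_cconst, show ℓ + (c - 2 * ℓ) = c - ℓ by ring]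

/-- The isometry of the level set induced by translation. -/
def shiftLevelEquiv (α : Ordinal) (δ : ℝ) : ↥(level z α) ≃ᵢ ↥(level z α) where
  toFun := fun p => ⟨shift p.1 δ, by
    show comp (shift p.1 δ) ≤ α
    rw [comp_shift]
    exact p.2⟩
  invFun := fun p => ⟨shift p.1 (-δ), by
    show comp (shift p.1 (-δ)) ≤ α
    rw [comp_shift]
    exact p.2⟩
  left_inv := fun p => Subtype.ext (by
    show shift (shift p.1 δ) (-δ) = p.1
    rw [shift_shift, show δ + -δ = 0 by ring, shift_zero])
  right_inv := fun p => Subtype.ext (by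
    show shift (shift p.1 (-δ)) δ = p.1
    rw [shift_shift, show -δ + δ = 0 by ring, shift_zero])
  isometry_toFun := Isometry.of_dist_eq fun p q => by
    rw [Subtype.dist_eq, Subtype.dist_eq]
    exact dist_shift p.1 q.1 δ

/-- The isometry of the level set induced by reflection. -/
def reflLevelEquiv (α : Ordinal) (c : ℝ) : ↥(level z α) ≃ᵢ ↥(level z α) where
  toFun := fun p => ⟨reflShift c p.1, by
    show comp (reflShift c p.1) ≤ α
    rw [comp_reflShift]
    exact p.2⟩
  invFun := fun p => ⟨reflShift c p.1, by
    show comp (reflShift c p.1) ≤ α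
    rw [comp_reflShift]
    exact p.2⟩
  left_inv := fun p => Subtype.ext (reflShift_reflShift c p.1)
  right_inv := fun p => Subtype.ext (reflShift_reflShift c p.1)
  isometry_toFun := Isometry.of_dist_eq fun p q => by
    rw [Subtype.dist_eq, Subtype.dist_eq]
    exact dist_reflShift c p.1 q.1

end UTree

/-- Classification of isometries of the real line. -/
theorem real_isometryEquiv_classify (θ : ℝ ≃ᵢ ℝ) :
    (∀ x, θ x = x + θ 0) ∨ (∀ x, θ x = -x + θ 0) := by
  have key : ∀ x y : ℝ, |θ x - θ y| = |x - y| := fun x y => by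
    have h := θ.isometry.dist_eq x y
    simpa [Real.dist_eq] using h
  have h1 : θ 1 - θ 0 = 1 ∨ θ 1 - θ 0 = -1 := by
    have h := key 1 0
    rw [show (1 : ℝ) - 0 = 1 by ring] at h
    rcases (abs_eq (by norm_num : (0:ℝ) ≤ 1)).mp (by simpa using h) with h' | h'
    · exact Or.inl h'
    · exact Or.inr h'
  rcases h1 with h | h
  · left
    intro x
    have q1 : (θ x - θ 0) ^ 2 = x ^ 2 := by
      rw [← sq_abs (θ x - θ 0), key x 0, sq_abs, sub_zero]
    have q2 : (θ x - θ 1) ^ 2 = (x - 1) ^ 2 := by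
      rw [← sq_abs (θ x - θ 1), key x 1, sq_abs]
    have hθ1 : θ 1 = θ 0 + 1 := by linarith
    rw [hθ1] at q2
    nlinarith [q1, q2]
  · right
    intro x
    have q1 : (θ x - θ 0) ^ 2 = x ^ 2 := by
      rw [← sq_abs (θ x - θ 0), key x 0, sq_abs, sub_zero]
    have q2 : (θ x - θ 1) ^ 2 = (x - 1) ^ 2 := by
      rw [← sq_abs (θ x - θ 1), key x 1, sq_abs]
    have hθ1 : θ 1 = θ 0 - 1 := by linarith
    rw [hθ1] at q2
    nlinarith [q1, q2]

/-- The stabiliser of `L_0` in `Isom(T_κ^{[α]})` surjects onto `Isom(L_0) ≅ Isom(ℝ)`: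
every isometry of `ℝ ≅ L_0` extends to an isometry of `T_κ^{[α]}`; in particular every
translation and a reflection of `L_0` extend. -/
theorem stmt8 (κ : Cardinal) (hκ : 3 ≤ κ) (C : Type) (z : C) (hC : IsLabelSet κ C)
    (α : Ordinal) (hα1 : 1 ≤ α) (hαc : IsCountableOrdinal α) :
    (∀ θ : ℝ ≃ᵢ ℝ, ∃ ψ : ↥(UTree.level z α) ≃ᵢ ↥(UTree.level z α),
      ∀ r : ℝ, ψ ⟨UTree.cconst r, UTree.cconst_mem_level α⟩ =
        ⟨UTree.cconst (θ r), UTree.cconst_mem_level α⟩) ∧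
    (∀ r : ℝ, 0 < r → ∃ ψ : ↥(UTree.level z α) ≃ᵢ ↥(UTree.level z α),
      ∀ s : ℝ, ψ ⟨UTree.cconst s, UTree.cconst_mem_level α⟩ =
        ⟨UTree.cconst (s + r), UTree.cconst_mem_level α⟩) ∧
    (∃ ψ : ↥(UTree.level z α) ≃ᵢ ↥(UTree.level z α),
      ∀ s : ℝ, ψ ⟨UTree.cconst s, UTree.cconst_mem_level α⟩ =
        ⟨UTree.cconst (-s), UTree.cconst_mem_level α⟩) := by
  have main : ∀ θ : ℝ ≃ᵢ ℝ, ∃ ψ : ↥(UTree.level z α) ≃ᵢ ↥(UTree.level z α),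
      ∀ r : ℝ, ψ ⟨UTree.cconst r, UTree.cconst_mem_level α⟩ =
        ⟨UTree.cconst (θ r), UTree.cconst_mem_level α⟩ := by
    intro θ
    rcases real_isometryEquiv_classify θ with h | h
    · refine ⟨UTree.shiftLevelEquiv α (θ 0), fun r => Subtype.ext ?_⟩
      show UTree.shift (UTree.cconst r) (θ 0) = UTree.cconst (θ r)
      rw [UTree.shift_cconst, h r]
    · refine ⟨UTree.reflLevelEquiv α (θ 0), fun r => Subtype.ext ?_⟩
      show UTree.reflShift (θ 0) (UTree.cconst r) = UTree.cconst (θ r)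
      rw [UTree.reflShift_cconst, h r, show θ 0 - r = -r + θ 0 by ring]
  refine ⟨main, ?_, ?_⟩
  · intro r _
    refine ⟨UTree.shiftLevelEquiv α r, fun s => Subtype.ext ?_⟩
    show UTree.shift (UTree.cconst s) r = UTree.cconst (s + r)
    rw [UTree.shift_cconst]
  · refine ⟨UTree.reflLevelEquiv α 0, fun s => Subtype.ext ?_⟩
    show UTree.reflShift 0 (UTree.cconst s) = UTree.cconst (-s)
    rw [UTree.reflShift_cconst, show (0:ℝ) - s = -s by ring]


end
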